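/- Let T = 𝔾_m^n be a torus with cocharacter lattice N ≅ ℤ^n, and let N_ℝ = ℝ^n. The set PL(N_ℝ) of continuous, conical (positively homogeneous of degree 1), piecewise-linear functions f : N_ℝ → ℝ whose domains of linearity form a finite rational polyhedral fan and which take integer values on N, is: (a) closed under addition; (b) closed under pointwise minimum; (c) separates points of the unit sphere Σ ⊂ N_ℝ. Consequently the ℚ-span of PL(N_ℝ), restricted to Σ, is dense in C(Σ,ℝ), and hence every continuous conical function on N_ℝ is a uniform-on-compacts limit of ℚ-linear combinations of such piecewise linear functions. -/

import Mathlib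

/-- A rational polyhedral cone in `ℝⁿ`: intersection of finitely many rational
half-spaces. -/
def IsRatCone (n : ℕ) (σ : Set (Fin n → ℝ)) : Prop :=
  ∃ L : Finset (Fin n → ℚ), σ = {x | ∀ l ∈ L, 0 ≤ ∑ i, (l i : ℝ) * x i}

/-- Continuous, conical, piecewise-linear functions on `ℝⁿ` whose domains of linearity
are given by a finite family of rational polyhedral cones covering `ℝⁿ`, taking integer
values on the lattice `ℤⁿ`. -/
def IsPL (n : ℕ) (f : (Fin n → ℝ) → ℝ) : Prop :=
  Continuous f ∧
  (∀ c : ℝ, 0 < c → ∀ x, f (c • x) = c * f x) ∧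
  (∀ m : Fin n → ℤ, ∃ z : ℤ, f (fun i => (m i : ℝ)) = (z : ℝ)) ∧
  ∃ C : Finset (Set (Fin n → ℝ)), (∀ σ ∈ C, IsRatCone n σ) ∧
    (∀ x : Fin n → ℝ, ∃ σ ∈ C, x ∈ σ) ∧
    ∀ σ ∈ C, ∃ l : Fin n → ℝ, ∀ x ∈ σ, f x = ∑ i, l i * x i

section Lemmas
variable {n : ℕ}

lemma ratCone_closed {n : ℕ} {σ : Set (Fin n → ℝ)} (h : IsRatCone n σ) : IsClosed σ := by
  obtain ⟨L, rfl⟩ := h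
  have : {x : Fin n → ℝ | ∀ l ∈ L, 0 ≤ ∑ i, (l i : ℝ) * x i}
      = ⋂ l ∈ L, {x : Fin n → ℝ | 0 ≤ ∑ i, (l i : ℝ) * x i} := by
    ext x; simp
  rw [this]
  refine isClosed_biInter fun l _ => ?_
  exact isClosed_le continuous_const (by continuity)


lemma ratCone_smul_mem {σ : Set (Fin n → ℝ)} (h : IsRatCone n σ)
    {c : ℝ} (hc : 0 ≤ c) {x : Fin n → ℝ} (hx : x ∈ σ) : c • x ∈ σ := by
  obtain ⟨L, rfl⟩ := h
  intro l hl
  have h0 := hx l hl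
  have he : ∑ i, (l i : ℝ) * (c • x) i = c * ∑ i, (l i : ℝ) * x i := by
    rw [Finset.mul_sum]
    exact Finset.sum_congr rfl fun i _ => by simp [Pi.smul_apply]; ring
  rw [he]; exact mul_nonneg hc h0


lemma ratCone_inter {n : ℕ} {σ τ : Set (Fin n → ℝ)} (hσ : IsRatCone n σ) (hτ : IsRatCone n τ) :
    IsRatCone n (σ ∩ τ) := by
  classical
  obtain ⟨L, rfl⟩ := hσ; obtain ⟨M, rfl⟩ := hτ
  exact ⟨L ∪ M, by ext x; simp [Finset.mem_union, or_imp, forall_and]⟩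

lemma ratCone_halfspace {n : ℕ} {σ : Set (Fin n → ℝ)} (hσ : IsRatCone n σ) (c : Fin n → ℚ) :
    IsRatCone n (σ ∩ {x | 0 ≤ ∑ i, (c i : ℝ) * x i}) := by
  classical
  obtain ⟨L, rfl⟩ := hσ
  refine ⟨insert c L, ?_⟩
  ext x; simp [Finset.mem_insert, or_imp, forall_and, and_comm]



lemma interior_finset_biUnion_empty {X : Type*} [TopologicalSpace X]
    (s : Finset (Set X)) (h : ∀ t ∈ s, IsClosed t ∧ interior t = ∅) :
    interior (⋃ t ∈ s, t) = ∅ := by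
  classical
  induction s using Finset.induction_on with
  | empty => simp
  | @insert t s' hni ih =>
    rw [Finset.set_biUnion_insert]
    have ht := h t (Finset.mem_insert_self _ _)
    rw [Set.union_comm, interior_union_isClosed_of_interior_empty]
    · exact ih fun u hu => h u (Finset.mem_insert_of_mem hu)
    · exact isClosed_biUnion_finset fun u hu => (h u (Finset.mem_insert_of_mem hu)).1
    · exact ht.2

lemma cover_fulldim {X : Type*} [TopologicalSpace X]
    (C : Finset (Set X)) (hcl : ∀ σ ∈ C, IsClosed σ)
    (hcov : ∀ x : X, ∃ σ ∈ C, x ∈ σ) (x : X) :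
    ∃ σ ∈ C, x ∈ σ ∧ (interior σ).Nonempty := by
  classical
  set C' := C.filter (fun σ => (interior σ).Nonempty) with hC'
  have hU : (⋃ t ∈ C', t) = Set.univ := by
    have h1 : IsClosed (⋃ t ∈ C', t) :=
      isClosed_biUnion_finset fun u hu => hcl u (Finset.mem_filter.mp hu).1
    have h2 : interior (⋃ t ∈ C.filter (fun σ => ¬ (interior σ).Nonempty), t) = ∅ := by
      refine interior_finset_biUnion_empty _ fun t ht => ?_
      have := Finset.mem_filter.mp ht
      exact ⟨hcl t this.1, Set.not_nonempty_iff_eq_empty.mp this.2⟩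
    have h3 : (⋃ t ∈ C', t) ∪ (⋃ t ∈ C.filter (fun σ => ¬ (interior σ).Nonempty), t)
        = Set.univ := by
      ext y
      simp only [Set.mem_union, Set.mem_iUnion, Set.mem_univ, iff_true]
      obtain ⟨σ, hσC, hyσ⟩ := hcov y
      by_cases hi : (interior σ).Nonempty
      · exact Or.inl ⟨σ, Finset.mem_filter.mpr ⟨hσC, hi⟩, hyσ⟩
      · exact Or.inr ⟨σ, Finset.mem_filter.mpr ⟨hσC, hi⟩, hyσ⟩
    have := interior_union_isClosed_of_interior_empty h1 h2
    rw [h3, interior_univ] at this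
    exact Set.eq_univ_of_univ_subset (this ▸ interior_subset)
  have hx : x ∈ ⋃ t ∈ C', t := hU ▸ Set.mem_univ x
  simp only [Set.mem_iUnion] at hx
  obtain ⟨σ, hσ, hxσ⟩ := hx
  have := Finset.mem_filter.mp hσ
  exact ⟨σ, this.1, hxσ, this.2⟩



lemma rat_int_smul (q : ℚ) (d : ℕ) (h : q.den ∣ d) : ∃ z : ℤ, (z : ℚ) = (d:ℚ) * q := by
  obtain ⟨c, hc⟩ := h
  refine ⟨c * q.num, ?_⟩
  have h1 : (q.den : ℚ) * q = q.num := by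
    rw [mul_comm]; exact_mod_cast q.mul_den_eq_num
  push_cast
  rw [hc]; push_cast
  rw [mul_comm (q.den:ℚ) (c:ℚ), mul_assoc, h1]

lemma rational_form {n : ℕ} {σ : Set (Fin n → ℝ)} (hσ : IsRatCone n σ)
    (hne : (interior σ).Nonempty) {f : (Fin n → ℝ) → ℝ}
    (hint : ∀ m : Fin n → ℤ, ∃ z : ℤ, f (fun i => (m i : ℝ)) = (z : ℝ))
    {l : Fin n → ℝ} (hl : ∀ x ∈ σ, f x = ∑ i, l i * x i) :
    ∃ a : Fin n → ℚ, ∀ x ∈ σ, f x = ∑ i, (a i : ℝ) * x i := by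
  classical
  -- rational values on rational points of σ
  have val_rat : ∀ v : Fin n → ℚ, (fun i => (v i : ℝ)) ∈ σ →
      ∃ s : ℚ, ∑ i, l i * (v i : ℝ) = (s : ℝ) := by
    intro v hv
    set d : ℕ := ∏ i, (v i).den with hd
    have hdpos : 0 < d := Finset.prod_pos fun i _ => (v i).den_pos
    have hm : ∀ i, ∃ z : ℤ, (z : ℚ) = (d : ℚ) * v i := fun i =>
      rat_int_smul (v i) d (Finset.dvd_prod_of_mem _ (Finset.mem_univ i))
    choose m hmz using hm
    have hP : (fun i => (m i : ℝ)) = (d : ℝ) • (fun i => (v i : ℝ)) := by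
      funext i
      have := hmz i
      have : ((m i : ℚ) : ℝ) = (((d : ℚ) * v i : ℚ) : ℝ) := by rw [this]
      push_cast at this ⊢
      simpa [Pi.smul_apply] using this
    have hPσ : (fun i => (m i : ℝ)) ∈ σ := by
      rw [hP]; exact ratCone_smul_mem hσ (by positivity) hv
    obtain ⟨z, hz⟩ := hint m
    have h2 : f (fun i => (m i : ℝ)) = (d : ℝ) * ∑ i, l i * (v i : ℝ) := by
      rw [hl _ hPσ, Finset.mul_sum]
      refine Finset.sum_congr rfl fun i _ => ?_
      rw [congrFun hP i]
      simp [Pi.smul_apply]; ring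
    refine ⟨(z : ℚ) / d, ?_⟩
    have hdne : (d : ℝ) ≠ 0 := by positivity
    rw [hz] at h2
    push_cast
    field_simp
    linarith [h2]
  obtain ⟨x₀, hx₀⟩ := hne
  obtain ⟨ε, hε, hball⟩ := Metric.isOpen_iff.mp isOpen_interior x₀ hx₀
  have hballσ : Metric.ball x₀ ε ⊆ σ := hball.trans interior_subset
  have hq : ∀ i, ∃ q : ℚ, |x₀ i - q| < ε / 4 := fun i => exists_rat_near (x₀ i) (by positivity)
  choose q hqlt using hq
  obtain ⟨r, hr0, hr4⟩ := exists_rat_btwn (show (0:ℝ) < ε / 4 by positivity)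
  have hr0' : (0:ℝ) < r := hr0
  -- base point
  have hQσ : (fun i => (q i : ℝ)) ∈ σ := by
    apply hballσ
    rw [Metric.mem_ball, dist_pi_lt_iff hε]
    intro i
    rw [Real.dist_eq, abs_sub_comm]
    linarith [hqlt i]
  -- perturbed points
  have hPσ : ∀ j, (fun i => ((q i + if i = j then r else 0 : ℚ) : ℝ)) ∈ σ := by
    intro j
    apply hballσ
    rw [Metric.mem_ball, dist_pi_lt_iff hε]
    intro i
    rw [Real.dist_eq]
    have h1 := hqlt i
    by_cases h : i = j
    · subst h
      simp only [if_pos rfl]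
      push_cast
      have h2 : |(q i:ℝ) + r - x₀ i| ≤ |x₀ i - q i| + |(r:ℝ)| := by
        have h3 : (q i:ℝ) + r - x₀ i = -((x₀ i - q i) + (-(r:ℝ))) := by ring
        rw [h3, abs_neg]
        exact (abs_add_le _ _).trans (by rw [abs_neg])
      have h4 : |(r:ℝ)| = r := abs_of_pos hr0'
      linarith
    · simp only [if_neg h, add_zero]
      rw [abs_sub_comm]
      linarith
  -- rational values
  obtain ⟨s₀, hs₀⟩ := val_rat q hQσ
  have hsj : ∀ j, ∃ s : ℚ, ∑ i, l i * ((q i + if i = j then r else 0 : ℚ) : ℝ) = (s:ℝ) :=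
    fun j => val_rat _ (hPσ j)
  choose s hs using hsj
  have hsum : ∀ j, ∑ i, l i * ((q i + if i = j then r else 0 : ℚ) : ℝ)
      = (∑ i, l i * (q i : ℝ)) + l j * r := by
    intro j
    have hcast : ∀ i, ((q i + if i = j then r else 0 : ℚ) : ℝ)
        = (q i : ℝ) + (if i = j then (r:ℝ) else 0) := by
      intro i; split <;> push_cast <;> ring
    simp only [hcast, mul_add, Finset.sum_add_distrib, mul_ite, mul_zero]
    congr 1
    simpa using Finset.sum_ite_eq' Finset.univ j (fun i => l i * (r:ℝ))
  have hlj : ∀ j, l j = ((s j : ℝ) - s₀) / r := by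
    intro j
    have h1 := hs j
    rw [hsum j, hs₀] at h1
    field_simp
    linarith
  refine ⟨fun j => (s j - s₀) / r, fun x hx => ?_⟩
  rw [hl x hx]
  refine Finset.sum_congr rfl fun i _ => ?_
  rw [hlj i]
  push_cast
  ring



lemma pl_add {n : ℕ} {f g : (Fin n → ℝ) → ℝ} (hf : IsPL n f) (hg : IsPL n g) :
    IsPL n (f + g) := by
  classical
  obtain ⟨hfc, hfh, hfi, C, hCrat, hCcov, hClin⟩ := hf
  obtain ⟨hgc, hgh, hgi, D, hDrat, hDcov, hDlin⟩ := hg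
  refine ⟨hfc.add hgc, ?_, ?_, ?_⟩
  · intro c hc x; simp only [Pi.add_apply]; rw [hfh c hc, hgh c hc]; ring
  · intro m; obtain ⟨z1, h1⟩ := hfi m; obtain ⟨z2, h2⟩ := hgi m
    exact ⟨z1 + z2, by simp [Pi.add_apply, h1, h2]⟩
  · refine ⟨C.biUnion (fun σ => D.image (fun τ => σ ∩ τ)), ?_, ?_, ?_⟩
    · intro ρ hρ
      simp only [Finset.mem_biUnion, Finset.mem_image] at hρ
      obtain ⟨σ, hσ, τ, hτ, rfl⟩ := hρ
      exact ratCone_inter (hCrat σ hσ) (hDrat τ hτ)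
    · intro x
      obtain ⟨σ, hσ, hxσ⟩ := hCcov x; obtain ⟨τ, hτ, hxτ⟩ := hDcov x
      exact ⟨σ ∩ τ, Finset.mem_biUnion.mpr ⟨σ, hσ, Finset.mem_image.mpr ⟨τ, hτ, rfl⟩⟩, hxσ, hxτ⟩
    · intro ρ hρ
      simp only [Finset.mem_biUnion, Finset.mem_image] at hρ
      obtain ⟨σ, hσ, τ, hτ, rfl⟩ := hρ
      obtain ⟨l1, hl1⟩ := hClin σ hσ; obtain ⟨l2, hl2⟩ := hDlin τ hτ
      refine ⟨l1 + l2, fun x hx => ?_⟩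
      simp only [Pi.add_apply]
      rw [hl1 x hx.1, hl2 x hx.2, ← Finset.sum_add_distrib]
      exact Finset.sum_congr rfl fun i _ => by simp only [Pi.add_apply, mul_comm]; try ring

lemma pl_neg {n : ℕ} {f : (Fin n → ℝ) → ℝ} (hf : IsPL n f) : IsPL n (-f) := by
  obtain ⟨hfc, hfh, hfi, C, hCrat, hCcov, hClin⟩ := hf
  refine ⟨hfc.neg, ?_, ?_, C, hCrat, hCcov, ?_⟩
  · intro c hc x; simp only [Pi.neg_apply]; rw [hfh c hc]; ring
  · intro m; obtain ⟨z, h⟩ := hfi m; exact ⟨-z, by simp [Pi.neg_apply, h]⟩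
  · intro σ hσ
    obtain ⟨l, hl⟩ := hClin σ hσ
    refine ⟨-l, fun x hx => ?_⟩
    simp only [Pi.neg_apply]
    rw [hl x hx, ← Finset.sum_neg_distrib]
    exact Finset.sum_congr rfl fun i _ => by simp only [Pi.neg_apply, neg_mul]

lemma pl_zero {n : ℕ} : IsPL n (0 : (Fin n → ℝ) → ℝ) := by
  refine ⟨continuous_const, by simp, fun m => ⟨0, by simp⟩, {Set.univ}, ?_, ?_, ?_⟩
  · intro σ hσ
    rw [Finset.mem_singleton] at hσ; subst hσ
    exact ⟨∅, by ext x; simp⟩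
  · intro x; exact ⟨Set.univ, Finset.mem_singleton_self _, Set.mem_univ x⟩
  · intro σ _; exact ⟨0, fun x _ => by simp⟩

lemma pl_coord {n : ℕ} (i : Fin n) : IsPL n (fun x => x i) := by
  refine ⟨continuous_apply i, ?_, fun m => ⟨m i, rfl⟩, {Set.univ}, ?_, ?_, ?_⟩
  · intro c hc x; simp [Pi.smul_apply]
  · intro σ hσ
    rw [Finset.mem_singleton] at hσ; subst hσ
    exact ⟨∅, by ext x; simp⟩
  · intro x; exact ⟨Set.univ, Finset.mem_singleton_self _, Set.mem_univ x⟩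
  · intro σ _
    refine ⟨fun j => if j = i then 1 else 0, fun x _ => ?_⟩
    simp [ite_mul]



lemma pl_min {f g : (Fin n → ℝ) → ℝ} (hf : IsPL n f) (hg : IsPL n g) :
    IsPL n (fun x => min (f x) (g x)) := by
  classical
  obtain ⟨hfc, hfh, hfi, C, hCrat, hCcov, hClin⟩ := hf
  obtain ⟨hgc, hgh, hgi, D, hDrat, hDcov, hDlin⟩ := hg
  refine ⟨hfc.min hgc, ?_, ?_, ?_⟩
  · intro c hc x
    simp only
    rw [hfh c hc, hgh c hc]
    simpa [smul_eq_mul] using (smul_min_of_nonneg hc.le (f x) (g x)).symm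
  · intro m
    obtain ⟨z1, h1⟩ := hfi m; obtain ⟨z2, h2⟩ := hgi m
    refine ⟨min z1 z2, ?_⟩
    simp only [h1, h2]
    push_cast; rfl
  · -- the fan
    set E := C.biUnion (fun σ => D.image (fun τ => σ ∩ τ)) with hE
    have hErat : ∀ ρ ∈ E, IsRatCone n ρ := by
      intro ρ hρ
      simp only [hE, Finset.mem_biUnion, Finset.mem_image] at hρ
      obtain ⟨σ, hσ, τ, hτ, rfl⟩ := hρ
      exact ratCone_inter (hCrat σ hσ) (hDrat τ hτ)
    have hEcov : ∀ x : Fin n → ℝ, ∃ ρ ∈ E, x ∈ ρ := by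
      intro x
      obtain ⟨σ, hσ, hxσ⟩ := hCcov x; obtain ⟨τ, hτ, hxτ⟩ := hDcov x
      exact ⟨σ ∩ τ, Finset.mem_biUnion.mpr ⟨σ, hσ, Finset.mem_image.mpr ⟨τ, hτ, rfl⟩⟩, hxσ, hxτ⟩
    have hEf : ∀ ρ ∈ E, ∃ l : Fin n → ℝ, ∀ x ∈ ρ, f x = ∑ i, l i * x i := by
      intro ρ hρ
      simp only [hE, Finset.mem_biUnion, Finset.mem_image] at hρ
      obtain ⟨σ, hσ, τ, hτ, rfl⟩ := hρ
      obtain ⟨l, hl⟩ := hClin σ hσ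
      exact ⟨l, fun x hx => hl x hx.1⟩
    have hEg : ∀ ρ ∈ E, ∃ l : Fin n → ℝ, ∀ x ∈ ρ, g x = ∑ i, l i * x i := by
      intro ρ hρ
      simp only [hE, Finset.mem_biUnion, Finset.mem_image] at hρ
      obtain ⟨σ, hσ, τ, hτ, rfl⟩ := hρ
      obtain ⟨l, hl⟩ := hDlin τ hτ
      exact ⟨l, fun x hx => hl x hx.2⟩
    set E₁ := E.filter (fun ρ => (interior ρ).Nonempty) with hE₁
    have hE₁cov : ∀ x : Fin n → ℝ, ∃ ρ ∈ E₁, x ∈ ρ := by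
      intro x
      obtain ⟨ρ, hρ, hxρ, hni⟩ := cover_fulldim E (fun σ hσ => ratCone_closed (hErat σ hσ)) hEcov x
      exact ⟨ρ, Finset.mem_filter.mpr ⟨hρ, hni⟩, hxρ⟩
    have key : ∀ ρ : Set (Fin n → ℝ), ∃ a b : Fin n → ℚ, ρ ∈ E₁ →
        (∀ x ∈ ρ, f x = ∑ i, (a i : ℝ) * x i) ∧ (∀ x ∈ ρ, g x = ∑ i, (b i : ℝ) * x i) := by
      intro ρ
      by_cases hρ : ρ ∈ E₁
      · have hmem := Finset.mem_filter.mp hρ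
        obtain ⟨l1, hl1⟩ := hEf ρ hmem.1
        obtain ⟨l2, hl2⟩ := hEg ρ hmem.1
        obtain ⟨a, ha⟩ := rational_form (hErat ρ hmem.1) hmem.2 hfi hl1
        obtain ⟨b, hb⟩ := rational_form (hErat ρ hmem.1) hmem.2 hgi hl2
        exact ⟨a, b, fun _ => ⟨ha, hb⟩⟩
      · exact ⟨0, 0, fun h => absurd h hρ⟩
    choose A B hAB using key
    refine ⟨E₁.biUnion (fun ρ =>
        {ρ ∩ {x | 0 ≤ ∑ i, ((fun j => B ρ j - A ρ j) i : ℝ) * x i},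
         ρ ∩ {x | 0 ≤ ∑ i, ((fun j => A ρ j - B ρ j) i : ℝ) * x i}}), ?_, ?_, ?_⟩
    · intro ρ' hρ'
      simp only [Finset.mem_biUnion, Finset.mem_insert, Finset.mem_singleton] at hρ'
      obtain ⟨ρ, hρ, rfl | rfl⟩ := hρ'
      · exact ratCone_halfspace (hErat ρ (Finset.mem_filter.mp hρ).1) _
      · exact ratCone_halfspace (hErat ρ (Finset.mem_filter.mp hρ).1) _
    · intro x
      obtain ⟨ρ, hρ, hxρ⟩ := hE₁cov x
      obtain ⟨ha, hb⟩ := hAB ρ hρ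
      have hkey : ∑ i, (((fun j => B ρ j - A ρ j) i : ℚ) : ℝ) * x i = g x - f x := by
        rw [ha x hxρ, hb x hxρ, ← Finset.sum_sub_distrib]
        refine Finset.sum_congr rfl fun i _ => ?_
        push_cast; ring
      have hkey' : ∑ i, (((fun j => A ρ j - B ρ j) i : ℚ) : ℝ) * x i = f x - g x := by
        rw [ha x hxρ, hb x hxρ, ← Finset.sum_sub_distrib]
        refine Finset.sum_congr rfl fun i _ => ?_
        push_cast; ring
      rcases le_total (f x) (g x) with h | h
      · refine ⟨_, Finset.mem_biUnion.mpr ⟨ρ, hρ, Finset.mem_insert_self _ _⟩, hxρ, ?_⟩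
        rw [Set.mem_setOf_eq, hkey]; linarith
      · refine ⟨_, Finset.mem_biUnion.mpr ⟨ρ, hρ,
          Finset.mem_insert_of_mem (Finset.mem_singleton_self _)⟩, hxρ, ?_⟩
        rw [Set.mem_setOf_eq, hkey']; linarith
    · intro ρ' hρ'
      simp only [Finset.mem_biUnion, Finset.mem_insert, Finset.mem_singleton] at hρ'
      obtain ⟨ρ, hρ, rfl | rfl⟩ := hρ'
      · refine ⟨fun i => (A ρ i : ℝ), fun x hx => ?_⟩
        obtain ⟨ha, hb⟩ := hAB ρ hρ
        have hfg : f x ≤ g x := by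
          have h1 := hx.2
          rw [Set.mem_setOf_eq] at h1
          have hkey : ∑ i, (((fun j => B ρ j - A ρ j) i : ℚ) : ℝ) * x i = g x - f x := by
            rw [ha x hx.1, hb x hx.1, ← Finset.sum_sub_distrib]
            refine Finset.sum_congr rfl fun i _ => ?_
            push_cast; ring
          linarith [hkey ▸ h1]
        simp only [min_eq_left hfg]
        exact ha x hx.1
      · refine ⟨fun i => (B ρ i : ℝ), fun x hx => ?_⟩
        obtain ⟨ha, hb⟩ := hAB ρ hρ
        have hfg : g x ≤ f x := by
          have h1 := hx.2
          rw [Set.mem_setOf_eq] at h1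
          have hkey : ∑ i, (((fun j => A ρ j - B ρ j) i : ℚ) : ℝ) * x i = f x - g x := by
            rw [ha x hx.1, hb x hx.1, ← Finset.sum_sub_distrib]
            refine Finset.sum_congr rfl fun i _ => ?_
            push_cast; ring
          linarith [hkey ▸ h1]
        simp only [min_eq_right hfg]
        exact hb x hx.1



lemma pl_nsmul {f : (Fin n → ℝ) → ℝ} (hf : IsPL n f) (k : ℕ) : IsPL n ((k : ℝ) • f) := by
  induction k with
  | zero => simpa using pl_zero
  | succ k ih =>
    have : ((k + 1 : ℕ) : ℝ) • f = (k : ℝ) • f + f := by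
      funext x; simp only [Pi.smul_apply, Pi.add_apply, smul_eq_mul]; push_cast; ring
    rw [this]; exact pl_add ih hf

lemma pl_zsmul {f : (Fin n → ℝ) → ℝ} (hf : IsPL n f) (z : ℤ) : IsPL n ((z : ℝ) • f) := by
  obtain ⟨k, rfl | rfl⟩ := z.eq_nat_or_neg
  · exact_mod_cast pl_nsmul hf k
  · have : ((-(k:ℤ) : ℤ) : ℝ) • f = -((k : ℝ) • f) := by
      funext x; push_cast; simp [neg_smul]
    rw [this]; exact pl_neg (pl_nsmul hf k)

lemma mem_span_pl_iff {h : (Fin n → ℝ) → ℝ} :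
    h ∈ Submodule.span ℚ {f | IsPL n f} ↔
      ∃ (d : ℕ) (f : (Fin n → ℝ) → ℝ), 0 < d ∧ IsPL n f ∧ h = ((d : ℝ)⁻¹) • f := by
  constructor
  · intro hh
    induction hh using Submodule.span_induction with
    | mem f hf => exact ⟨1, f, one_pos, hf, by simp⟩
    | zero => exact ⟨1, 0, one_pos, pl_zero, by simp⟩
    | add f g _ _ ihf ihg =>
      obtain ⟨d, f', hd, hf', rfl⟩ := ihf
      obtain ⟨e, g', he, hg', rfl⟩ := ihg
      refine ⟨d * e, (e : ℝ) • f' + (d : ℝ) • g', Nat.mul_pos hd he,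
        pl_add (pl_nsmul hf' e) (pl_nsmul hg' d), ?_⟩
      funext x
      have hd0 : (d:ℝ) ≠ 0 := Nat.cast_ne_zero.mpr hd.ne'
      have he0 : (e:ℝ) ≠ 0 := Nat.cast_ne_zero.mpr he.ne'
      simp only [Pi.add_apply, Pi.smul_apply, smul_eq_mul]
      push_cast
      field_simp
    | smul q f _ ihf =>
      obtain ⟨d, f', hd, hf', rfl⟩ := ihf
      refine ⟨q.den * d, (q.num : ℝ) • f', Nat.mul_pos q.den_pos hd,
        pl_zsmul hf' q.num, ?_⟩
      funext x
      have hd0 : (d:ℝ) ≠ 0 := Nat.cast_ne_zero.mpr hd.ne'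
      have hden : ((q.den:ℝ)) ≠ 0 := Nat.cast_ne_zero.mpr q.den_nz
      have hq : (q : ℝ) = (q.num : ℝ) / (q.den : ℝ) := Rat.cast_def q
      simp only [Pi.smul_apply, smul_eq_mul, Rat.smul_def]
      push_cast
      rw [hq]
      field_simp
      try ring
  · rintro ⟨d, f, hd, hf, rfl⟩
    have : ((d : ℝ)⁻¹) • f = ((d : ℚ)⁻¹) • f := by
      funext x
      simp only [Pi.smul_apply, smul_eq_mul, Rat.smul_def]
      push_cast
      ring
    rw [this]
    exact Submodule.smul_mem _ _ (Submodule.subset_span hf)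



lemma span_cont {h : (Fin n → ℝ) → ℝ} (hh : h ∈ Submodule.span ℚ {f | IsPL n f}) :
    Continuous h := by
  obtain ⟨d, f, hd, hf, rfl⟩ := mem_span_pl_iff.mp hh
  have : ((d:ℝ)⁻¹ • f) = fun x => (d:ℝ)⁻¹ * f x := rfl
  rw [this]; exact continuous_const.mul hf.1

lemma span_conical {h : (Fin n → ℝ) → ℝ} (hh : h ∈ Submodule.span ℚ {f | IsPL n f}) :
    ∀ c : ℝ, 0 < c → ∀ x, h (c • x) = c * h x := by
  obtain ⟨d, f, hd, hf, rfl⟩ := mem_span_pl_iff.mp hh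
  intro c hc x
  simp only [Pi.smul_apply, smul_eq_mul]
  rw [hf.2.1 c hc]
  ring

lemma span_min {h₁ h₂ : (Fin n → ℝ) → ℝ} (hh₁ : h₁ ∈ Submodule.span ℚ {f | IsPL n f})
    (hh₂ : h₂ ∈ Submodule.span ℚ {f | IsPL n f}) :
    (fun x => min (h₁ x) (h₂ x)) ∈ Submodule.span ℚ {f | IsPL n f} := by
  obtain ⟨d, f, hd, hf, rfl⟩ := mem_span_pl_iff.mp hh₁
  obtain ⟨e, g, he, hg, rfl⟩ := mem_span_pl_iff.mp hh₂
  rw [mem_span_pl_iff]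
  refine ⟨d * e, fun x => min (((e:ℝ) • f) x) (((d:ℝ) • g) x), Nat.mul_pos hd he,
    pl_min (pl_nsmul hf e) (pl_nsmul hg d), ?_⟩
  funext x
  have hd0 : (0:ℝ) < d := by exact_mod_cast hd
  have he0 : (0:ℝ) < e := by exact_mod_cast he
  have key : ∀ (c a b : ℝ), 0 ≤ c → c * min a b = min (c*a) (c*b) :=
    fun c a b hc => by simpa [smul_eq_mul] using smul_min_of_nonneg hc a b
  simp only [Pi.smul_apply, smul_eq_mul]
  rw [key _ _ _ (by positivity : (0:ℝ) ≤ ((d*e:ℕ):ℝ)⁻¹)]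
  congr 1 <;> push_cast <;> field_simp <;> ring

lemma span_max {h₁ h₂ : (Fin n → ℝ) → ℝ} (hh₁ : h₁ ∈ Submodule.span ℚ {f | IsPL n f})
    (hh₂ : h₂ ∈ Submodule.span ℚ {f | IsPL n f}) :
    (fun x => max (h₁ x) (h₂ x)) ∈ Submodule.span ℚ {f | IsPL n f} := by
  have h1 : (fun x => max (h₁ x) (h₂ x))
      = h₁ + h₂ - (fun x => min (h₁ x) (h₂ x)) := by
    funext x
    simp only [Pi.sub_apply, Pi.add_apply]
    rcases le_total (h₁ x) (h₂ x) with h | h <;> simp [min_eq_left, min_eq_right,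
      max_eq_left, max_eq_right, h] <;> ring
  rw [h1]
  exact Submodule.sub_mem _ (Submodule.add_mem _ hh₁ hh₂) (span_min hh₁ hh₂)

theorem part4 (g : (Fin n → ℝ) → ℝ) (hgc : Continuous g)
    (hgh : ∀ c : ℝ, 0 < c → ∀ x, g (c • x) = c * g x)
    (K : Set (Fin n → ℝ)) (hK : IsCompact K) (ε : ℝ) (hε : 0 < ε) :
    ∃ h ∈ Submodule.span ℚ {f | IsPL n f}, ∀ x ∈ K, |g x - h x| ≤ ε := by
  classical
  set Sp : Set (Fin n → ℝ) := Metric.sphere 0 1 with hSp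
  haveI : CompactSpace ↥Sp := isCompact_iff_compactSpace.mp (isCompact_sphere 0 1)
  set S : Set ((Fin n → ℝ) → ℝ) := ↑(Submodule.span ℚ {f | IsPL n f}) with hS
  set L : Set C(↥Sp, ℝ) := {F | ∃ h ∈ S, ∀ s : ↥Sp, F s = h ↑s} with hL
  -- basic closure properties of L
  have hL0 : (0 : C(↥Sp, ℝ)) ∈ L := ⟨0, Submodule.zero_mem _, fun s => rfl⟩
  have hLadd : ∀ F G : C(↥Sp, ℝ), F ∈ L → G ∈ L → F + G ∈ L := by
    rintro F G ⟨h₁, hh₁, hF⟩ ⟨h₂, hh₂, hG⟩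
    exact ⟨h₁ + h₂, Submodule.add_mem _ hh₁ hh₂, fun s => by
      simp [ContinuousMap.add_apply, hF s, hG s]⟩
  have hLsmulq : ∀ (q : ℚ) (F : C(↥Sp, ℝ)), F ∈ L → (q : ℝ) • F ∈ L := by
    rintro q F ⟨h, hh, hF⟩
    refine ⟨(q : ℚ) • h, Submodule.smul_mem _ _ hh, fun s => by
      simp [ContinuousMap.smul_apply, hF s, Pi.smul_apply, Rat.smul_def]⟩
  have hLinf : ∀ F G : C(↥Sp, ℝ), F ∈ L → G ∈ L → F ⊓ G ∈ L := by
    rintro F G ⟨h₁, hh₁, hF⟩ ⟨h₂, hh₂, hG⟩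
    exact ⟨fun x => min (h₁ x) (h₂ x), span_min hh₁ hh₂, fun s => by
      simp [ContinuousMap.inf_apply, hF s, hG s]⟩
  have hLsup : ∀ F G : C(↥Sp, ℝ), F ∈ L → G ∈ L → F ⊔ G ∈ L := by
    rintro F G ⟨h₁, hh₁, hF⟩ ⟨h₂, hh₂, hG⟩
    exact ⟨fun x => max (h₁ x) (h₂ x), span_max hh₁ hh₂, fun s => by
      simp [ContinuousMap.sup_apply, hF s, hG s]⟩
  -- closure of L
  have hL'inf : ∀ F G : C(↥Sp, ℝ), F ∈ closure L → G ∈ closure L → F ⊓ G ∈ closure L := by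
    intro F G hF hG
    rw [Metric.mem_closure_iff] at hF hG ⊢
    intro δ hδ
    obtain ⟨F', hF', hdF⟩ := hF δ hδ
    obtain ⟨G', hG', hdG⟩ := hG δ hδ
    refine ⟨F' ⊓ G', hLinf _ _ hF' hG', ?_⟩
    rw [ContinuousMap.dist_lt_iff hδ]
    intro s
    simp only [ContinuousMap.inf_apply]
    calc dist (min (F s) (G s)) (min (F' s) (G' s))
        ≤ max (dist (F s) (F' s)) (dist (G s) (G' s)) := by
          rw [Real.dist_eq, Real.dist_eq, Real.dist_eq]
          exact abs_min_sub_min_le_max _ _ _ _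
      _ < δ := max_lt (lt_of_le_of_lt (ContinuousMap.dist_apply_le_dist s) hdF)
          (lt_of_le_of_lt (ContinuousMap.dist_apply_le_dist s) hdG)
  have hL'sup : ∀ F G : C(↥Sp, ℝ), F ∈ closure L → G ∈ closure L → F ⊔ G ∈ closure L := by
    intro F G hF hG
    rw [Metric.mem_closure_iff] at hF hG ⊢
    intro δ hδ
    obtain ⟨F', hF', hdF⟩ := hF δ hδ
    obtain ⟨G', hG', hdG⟩ := hG δ hδ
    refine ⟨F' ⊔ G', hLsup _ _ hF' hG', ?_⟩
    rw [ContinuousMap.dist_lt_iff hδ]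
    intro s
    simp only [ContinuousMap.sup_apply]
    calc dist (max (F s) (G s)) (max (F' s) (G' s))
        ≤ max (dist (F s) (F' s)) (dist (G s) (G' s)) := by
          rw [Real.dist_eq, Real.dist_eq, Real.dist_eq]
          exact abs_max_sub_max_le_max _ _ _ _
      _ < δ := max_lt (lt_of_le_of_lt (ContinuousMap.dist_apply_le_dist s) hdF)
          (lt_of_le_of_lt (ContinuousMap.dist_apply_le_dist s) hdG)
  have hL'add : ∀ F G : C(↥Sp, ℝ), F ∈ closure L → G ∈ closure L → F + G ∈ closure L := by
    intro F G hF hG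
    rw [Metric.mem_closure_iff] at hF hG ⊢
    intro δ hδ
    obtain ⟨F', hF', hdF⟩ := hF (δ/2) (by positivity)
    obtain ⟨G', hG', hdG⟩ := hG (δ/2) (by positivity)
    refine ⟨F' + G', hLadd _ _ hF' hG', ?_⟩
    calc dist (F + G) (F' + G') ≤ dist F F' + dist G G' := dist_add_add_le _ _ _ _
      _ < δ := by linarith
  have hL'smul : ∀ (r : ℝ) (F : C(↥Sp, ℝ)), F ∈ closure L → r • F ∈ closure L := by
    intro r F hF
    rw [Metric.mem_closure_iff] at hF ⊢
    intro δ hδ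
    obtain ⟨q, hq⟩ := exists_rat_near r (show (0:ℝ) < δ/(2*(‖F‖+1)) by positivity)
    obtain ⟨F', hF', hdF⟩ := hF (δ/(2*(|(q:ℝ)|+1))) (by positivity)
    refine ⟨(q:ℝ) • F', hLsmulq q _ hF', ?_⟩
    have hF0 : (0:ℝ) ≤ ‖F‖ := norm_nonneg _
    have h1 : dist (r • F) ((q:ℝ) • F) ≤ |r - (q:ℝ)| * ‖F‖ := by
      rw [dist_eq_norm, ← sub_smul, norm_smul, Real.norm_eq_abs]
    have h2 : dist ((q:ℝ) • F) ((q:ℝ) • F') = |(q:ℝ)| * dist F F' := by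
      rw [dist_eq_norm, dist_eq_norm, ← smul_sub, norm_smul, Real.norm_eq_abs]
    have hq0 : (0:ℝ) ≤ |(q:ℝ)| := abs_nonneg _
    calc dist (r • F) ((q:ℝ) • F') ≤ dist (r • F) ((q:ℝ) • F) + dist ((q:ℝ) • F) ((q:ℝ) • F') :=
          dist_triangle _ _ _
      _ ≤ |r - (q:ℝ)| * ‖F‖ + |(q:ℝ)| * dist F F' := by rw [h2]; linarith
      _ < δ := by
          have b1 : |r - (q:ℝ)| * ‖F‖ < δ/2 := by
            have := mul_le_mul_of_nonneg_right hq.le hF0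
            have h3 : δ/(2*(‖F‖+1)) * ‖F‖ < δ/2 := by
              rw [div_mul_eq_mul_div, div_lt_div_iff₀ (by positivity) (by positivity)]
              nlinarith
            calc |r - (q:ℝ)| * ‖F‖ ≤ δ/(2*(‖F‖+1)) * ‖F‖ := this
              _ < δ/2 := h3
          have b2 : |(q:ℝ)| * dist F F' < δ/2 := by
            have hd0 : (0:ℝ) ≤ dist F F' := dist_nonneg
            calc |(q:ℝ)| * dist F F' ≤ |(q:ℝ)| * (δ/(2*(|(q:ℝ)|+1))) :=
                  mul_le_mul_of_nonneg_left hdF.le hq0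
              _ < δ/2 := by
                  rw [mul_div_assoc']
                  rw [div_lt_div_iff₀ (by positivity) (by positivity)]
                  nlinarith
          linarith
  -- special members of L
  set U : Fin n → C(↥Sp, ℝ) := fun i =>
    ⟨fun s => (s : Fin n → ℝ) i, (continuous_apply i).comp continuous_subtype_val⟩ with hU
  set W : Fin n → C(↥Sp, ℝ) := fun i =>
    ⟨fun s => min ((s : Fin n → ℝ) i) 0,
      ((continuous_apply i).comp continuous_subtype_val).min continuous_const⟩ with hW
  have hUL : ∀ i, U i ∈ L := fun i =>
    ⟨fun x => x i, Submodule.subset_span (pl_coord i), fun s => rfl⟩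
  have hWL : ∀ i, W i ∈ L := by
    intro i
    refine ⟨fun x => min (x i) 0, ?_, fun s => rfl⟩
    have h0 : ((0 : (Fin n → ℝ) → ℝ)) ∈ Submodule.span ℚ {f | IsPL n f} := Submodule.zero_mem _
    have := span_min (Submodule.subset_span (pl_coord i)) h0
    simpa [hS] using this
  -- a 2x2 solving device
  have solve : ∀ (x y : ↥Sp) (u w : C(↥Sp,ℝ)), u ∈ closure L → w ∈ closure L →
      ∀ a b : ℝ, u x * w y - u y * w x ≠ 0 → ∃ F ∈ closure L, F x = a ∧ F y = b := by
    intro x y u w hu hw a b hdet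
    refine ⟨((a * w y - b * w x)/(u x * w y - u y * w x)) • u +
            ((u x * b - u y * a)/(u x * w y - u y * w x)) • w,
      hL'add _ _ (hL'smul _ _ hu) (hL'smul _ _ hw), ?_, ?_⟩ <;>
      simp only [ContinuousMap.add_apply, ContinuousMap.smul_apply, smul_eq_mul] <;>
      rw [div_mul_eq_mul_div, div_mul_eq_mul_div, ← add_div, div_eq_iff hdet] <;> ring
  have exU : ∀ (x : ↥Sp), ∃ i, (x : Fin n → ℝ) i ≠ 0 := by
    intro x
    by_contra hc
    push_neg at hc
    have h0 : (x : Fin n → ℝ) = 0 := funext hc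
    have hx1 : ‖(x : Fin n → ℝ)‖ = 1 := mem_sphere_zero_iff_norm.mp x.2
    rw [h0] at hx1; simp at hx1
  have sep : (closure L).SeparatesPointsStrongly := by
    intro v x y
    by_cases hxy : x = y
    · subst hxy
      obtain ⟨i, hi⟩ := exU x
      refine ⟨(v x / (x : Fin n → ℝ) i) • U i, hL'smul _ _ (subset_closure (hUL i)), ?_, ?_⟩ <;>
      · simp only [ContinuousMap.smul_apply, smul_eq_mul, hU, ContinuousMap.coe_mk]
        field_simp
    · by_cases hprop : ∀ i j, (x : Fin n → ℝ) i * (y : Fin n → ℝ) j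
          = (x : Fin n → ℝ) j * (y : Fin n → ℝ) i
      · -- y = -x : use coordinate and truncated coordinate
        obtain ⟨i₀, hi₀⟩ := exU x
        have hx1 : ‖(x : Fin n → ℝ)‖ = 1 := mem_sphere_zero_iff_norm.mp x.2
        have hy1 : ‖(y : Fin n → ℝ)‖ = 1 := mem_sphere_zero_iff_norm.mp y.2
        set c : ℝ := (y : Fin n → ℝ) i₀ / (x : Fin n → ℝ) i₀ with hc
        have hyc : (y : Fin n → ℝ) = c • (x : Fin n → ℝ) := by
          funext j
          have hj := hprop i₀ j
          simp only [Pi.smul_apply, smul_eq_mul, hc]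
          field_simp
          linarith [hj]
        have hc1 : |c| = 1 := by
          have h := hy1
          rw [hyc, norm_smul, hx1, Real.norm_eq_abs, mul_one] at h
          exact h
        have hcne : c ≠ 1 := by
          intro h
          rw [h, one_smul] at hyc
          exact hxy (Subtype.ext hyc.symm)
        have hcm : c = -1 := by
          rcases (abs_eq (le_of_lt one_pos)).mp hc1 with h | h
          · exact absurd h hcne
          · exact h
        have hyi : (y : Fin n → ℝ) i₀ = -((x : Fin n → ℝ) i₀) := by
          rw [hyc, hcm]; simp
        have hdet : (U i₀) x * (W i₀) y - (U i₀) y * (W i₀) x ≠ 0 := by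
          simp only [hU, hW, ContinuousMap.coe_mk]
          rw [hyi]
          rcases lt_or_gt_of_ne hi₀ with hneg | hpos
          · rw [min_eq_left (by linarith : (x : Fin n → ℝ) i₀ ≤ 0),
                min_eq_right (by linarith : (0:ℝ) ≤ -((x : Fin n → ℝ) i₀))]
            intro h; nlinarith
          · rw [min_eq_left (by linarith : -((x : Fin n → ℝ) i₀) ≤ 0),
                min_eq_right (by linarith : (0:ℝ) ≤ (x : Fin n → ℝ) i₀)]
            intro h; nlinarith
        obtain ⟨F, hF, hFx, hFy⟩ := solve x y (U i₀) (W i₀)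
          (subset_closure (hUL i₀)) (subset_closure (hWL i₀)) (v x) (v y) hdet
        exact ⟨F, hF, hFx, hFy⟩
      · push_neg at hprop
        obtain ⟨i, j, hij⟩ := hprop
        have hdet : (U i) x * (U j) y - (U i) y * (U j) x ≠ 0 := by
          simp only [hU, ContinuousMap.coe_mk]
          intro h
          apply hij
          linear_combination h
        obtain ⟨F, hF, hFx, hFy⟩ := solve x y (U i) (U j)
          (subset_closure (hUL i)) (subset_closure (hUL j)) (v x) (v y) hdet
        exact ⟨F, hF, hFx, hFy⟩
  -- Stone–Weierstrass
  have htop : closure L = Set.univ := by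
    have h := ContinuousMap.sublattice_closure_eq_top (closure L)
      ⟨0, subset_closure hL0⟩ (fun F hF G hG => hL'inf F G hF hG) (fun F hF G hG => hL'sup F G hF hG) sep
    rw [closure_closure] at h
    rw [← Set.top_eq_univ]
    exact h
  set G : C(↥Sp, ℝ) := ⟨fun s => g ↑s, hgc.comp continuous_subtype_val⟩ with hGdef
  have hG : G ∈ closure L := by rw [htop]; trivial
  obtain ⟨R, hR⟩ := hK.isBounded.subset_closedBall 0
  set R' : ℝ := max R 1 with hR'def
  have hR'pos : 0 < R' := lt_of_lt_of_le one_pos (le_max_right _ _)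
  have hKR : K ⊆ Metric.closedBall 0 R' :=
    hR.trans (Metric.closedBall_subset_closedBall (le_max_left _ _))
  obtain ⟨F', hF'L, hdF⟩ := Metric.mem_closure_iff.mp hG (ε/R') (by positivity)
  obtain ⟨h, hhS, hres⟩ := hF'L
  refine ⟨h, hhS, ?_⟩
  intro x hx
  by_cases hx0 : x = 0
  · subst hx0
    have hg0 : g 0 = 0 := by
      have h2 := hgh 2 two_pos 0
      rw [smul_zero] at h2; linarith
    have hh0 : h 0 = 0 := by
      have h2 := span_conical hhS 2 two_pos 0
      rw [smul_zero] at h2; linarith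
    rw [hg0, hh0]; simpa using hε.le
  · have hxn : 0 < ‖x‖ := norm_pos_iff.mpr hx0
    have hs1 : ‖(‖x‖⁻¹ • x)‖ = 1 := norm_smul_inv_norm hx0
    set s : ↥Sp := ⟨‖x‖⁻¹ • x, mem_sphere_zero_iff_norm.mpr hs1⟩ with hsdef
    have hxs : x = ‖x‖ • (s : Fin n → ℝ) := by
      rw [hsdef]
      simp only [smul_smul, mul_inv_cancel₀ hxn.ne']
      simp
    have hgx : g x = ‖x‖ * g ↑s := by
      conv_lhs => rw [hxs]
      exact hgh ‖x‖ hxn _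
    have hhx : h x = ‖x‖ * h ↑s := by
      conv_lhs => rw [hxs]
      exact span_conical hhS ‖x‖ hxn _
    have hpt : |g ↑s - h ↑s| ≤ ε / R' := by
      have h1 : dist (G s) (F' s) ≤ dist G F' := ContinuousMap.dist_apply_le_dist s
      have h2 : F' s = h ↑s := hres s
      have h3 : G s = g ↑s := rfl
      rw [h2, h3, Real.dist_eq] at h1
      exact h1.trans hdF.le
    have hxR : ‖x‖ ≤ R' := by
      have := hKR hx
      rwa [Metric.mem_closedBall, dist_zero_right] at this
    calc |g x - h x| = ‖x‖ * |g ↑s - h ↑s| := by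
          rw [hgx, hhx, ← mul_sub, abs_mul, abs_of_pos hxn]
      _ ≤ R' * (ε / R') := mul_le_mul hxR hpt (abs_nonneg _) hR'pos.le
      _ = ε := by field_simp


end Lemmas

/-- the set of such piecewise-linear conical functions is closed under
addition and pointwise minimum, separates points of the unit sphere, and its `ℚ`-span is
dense among continuous conical functions, uniformly on compact sets. -/
theorem stmt_10 (n : ℕ) :
    (∀ f g, IsPL n f → IsPL n g → IsPL n (f + g)) ∧
    (∀ f g, IsPL n f → IsPL n g → IsPL n (fun x => min (f x) (g x))) ∧
    (∀ x y : Fin n → ℝ, ‖x‖ = 1 → ‖y‖ = 1 → x ≠ y → ∃ f, IsPL n f ∧ f x ≠ f y) ∧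
    (∀ g : (Fin n → ℝ) → ℝ, Continuous g →
      (∀ c : ℝ, 0 < c → ∀ x, g (c • x) = c * g x) →
      ∀ K : Set (Fin n → ℝ), IsCompact K → ∀ ε : ℝ, 0 < ε →
        ∃ h ∈ Submodule.span ℚ {f | IsPL n f}, ∀ x ∈ K, |g x - h x| ≤ ε) := by
  refine ⟨fun f g hf hg => pl_add hf hg, fun f g hf hg => pl_min hf hg, ?_,
    fun g hgc hgh K hK ε hε => part4 g hgc hgh K hK ε hε⟩
  intro x y _ _ hxy
  have hex : ∃ i, x i ≠ y i := by
    by_contra hc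
    push_neg at hc
    exact hxy (funext hc)
  obtain ⟨i, hi⟩ := hex
  exact ⟨fun v => v i, pl_coord i, hi⟩
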